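/- (The operators P_k form a decreasing sequence of projections.) Let H be a complex Hilbert space, q ∈ ℝ with 0 < |q| < 1, and α a bounded operator on H satisfying α α* − q² α* α = (1 − q²)·1; set Γ := 1 − α* α. Since ‖Γ‖ ≤ 1 and q² < 1, each operator 1 − q^{2j} Γ (j ≥ 1) is invertible in B(H). Define P_0 := 1 and, for k ≥ 1, P_k := (α*)^k (1 − q² Γ)^{−1} (1 − q⁴ Γ)^{−1} ⋯ (1 − q^{2k} Γ)^{−1} α^k. Then each P_k is an orthogonal projection (P_k* = P_k and P_k² = P_k), and the sequence is decreasing: P_{k+1} ≤ P_k for all k ≥ 0, i.e., P_k − P_{k+1} is a positive operator. -/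

import Mathlib

open ContinuousLinearMap

/-- Given `α` and `q`, let `Γ := 1 − α* α` and define
`P_k := (α*)^k (1 − q²Γ)⁻¹ (1 − q⁴Γ)⁻¹ ⋯ (1 − q^{2k}Γ)⁻¹ α^k` (with `P_0 = 1`),
where the inverses are taken in the Banach algebra `B(H)` (via `Ring.inverse`). -/
noncomputable def qCCRProj {H : Type*} [NormedAddCommGroup H] [InnerProductSpace ℂ H]
    [CompleteSpace H] (q : ℝ) (α : H →L[ℂ] H) (k : ℕ) : H →L[ℂ] H :=
  (adjoint α) ^ k *
    ((List.range k).map (fun j =>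
      Ring.inverse ((1 : H →L[ℂ] H) -
        ((q : ℂ) ^ (2 * (j + 1))) • ((1 : H →L[ℂ] H) - adjoint α * α)))).prod *
    α ^ k

section Aux

local notation "⟪" x ", " y "⟫" => @inner ℂ _ _ x y

variable {H : Type*} [NormedAddCommGroup H] [InnerProductSpace ℂ H]
    [CompleteSpace H] (q : ℝ) (α : H →L[ℂ] H)
noncomputable def Gq : H →L[ℂ] H := (1 : H →L[ℂ] H) - adjoint α * α

noncomputable def Bq (j : ℕ) : H →L[ℂ] H :=
  (1 : H →L[ℂ] H) - ((q : ℂ) ^ (2 * j)) • Gq α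

noncomputable def Dq (k : ℕ) : H →L[ℂ] H :=
  ((List.range k).map (fun j => Ring.inverse (Bq q α (j + 1)))).prod

section basic
variable (hccr : α * adjoint α - ((q : ℂ) ^ 2) • (adjoint α * α) =
      ((1 : ℂ) - (q : ℂ) ^ 2) • (1 : H →L[ℂ] H))

lemma starGq : star (Gq α) = Gq α := by
  simp [Gq, star_sub, star_mul, star_eq_adjoint, adjoint_adjoint]

lemma adjointGq : adjoint (Gq α) = Gq α := by
  rw [← star_eq_adjoint]; exact starGq α

lemma starBq (j : ℕ) : star (Bq q α j) = Bq q α j := by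
  simp [Bq, star_sub, star_smul, star_mul, star_eq_adjoint, adjoint_adjoint,
    Complex.star_def, map_pow, Complex.conj_ofReal, starGq, adjointGq]

lemma adjointBq (j : ℕ) : adjoint (Bq q α j) = Bq q α j := by
  rw [← star_eq_adjoint]; exact starBq q α j

include hccr in
lemma alpha_adj : α * adjoint α = Bq q α 1 := by
  have h := sub_eq_iff_eq_add.mp hccr
  rw [h, Bq, Gq]
  norm_num
  module

include hccr in
lemma alpha_Gamma : α * Gq α = ((q:ℂ)^2) • (Gq α * α) := by
  have h1 : α * Gq α = α - (α * adjoint α) * α := by rw [Gq]; noncomm_ring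
  rw [h1, alpha_adj q α hccr, Bq, sub_mul, one_mul, smul_mul_assoc]
  norm_num

include hccr in
lemma Gamma_adj : Gq α * adjoint α = ((q:ℂ)^2) • (adjoint α * Gq α) := by
  have h := congrArg star (alpha_Gamma q α hccr)
  simpa [star_mul, star_smul, star_eq_adjoint, adjoint_adjoint, adjointGq,
    Complex.star_def, map_pow, Complex.conj_ofReal] using h

include hccr in
lemma alpha_Bq (j : ℕ) : α * Bq q α j = Bq q α (j + 1) * α := by
  rw [Bq, Bq, mul_sub, sub_mul, mul_one, one_mul, mul_smul_comm,
    alpha_Gamma q α hccr, smul_mul_assoc, smul_smul]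
  congr 2
  rw [← pow_add]
  ring_nf

include hccr in
lemma Bq_adjα (j : ℕ) : Bq q α j * adjoint α = adjoint α * Bq q α (j + 1) := by
  have h := congrArg star (alpha_Bq q α hccr j)
  simpa [star_mul, star_eq_adjoint, adjoint_adjoint, adjointBq] using h

end basic

section norm
variable (hccr : α * adjoint α - ((q : ℂ) ^ 2) • (adjoint α * α) =
      ((1 : ℂ) - (q : ℂ) ^ 2) • (1 : H →L[ℂ] H))
  (hq0 : q ≠ 0) (hq1 : |q| < 1)

include hccr hq1 in
lemma alpha_norm : ‖α‖ ≤ 1 := by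
  have hq2 : q ^ 2 < 1 := by nlinarith [abs_nonneg q, sq_abs q]
  have hAA : ‖adjoint α * α‖ = ‖α‖ * ‖α‖ := norm_adjoint_comp_self α
  have haA : ‖α * adjoint α‖ = ‖α‖ * ‖α‖ := by
    have h := norm_adjoint_comp_self (adjoint α)
    rw [adjoint_adjoint] at h
    rw [show ‖α * adjoint α‖ = ‖α ∘L adjoint α‖ from rfl, h,
      (adjoint : (H →L[ℂ] H) ≃ₗᵢ⋆[ℂ] (H →L[ℂ] H)).norm_map α]
  have h := sub_eq_iff_eq_add.mp hccr
  have hb : ‖α * adjoint α‖ ≤ (1 - q ^ 2) * 1 + q ^ 2 * (‖α‖ * ‖α‖) := by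
    rw [h]
    refine le_trans (norm_add_le _ _) (add_le_add ?_ ?_)
    · refine le_trans (opNorm_smul_le _ _) ?_
      have h1 : ‖(1 : ℂ) - (q : ℂ) ^ 2‖ = 1 - q ^ 2 := by
        rw [show (1 : ℂ) - (q : ℂ) ^ 2 = (((1 - q ^ 2 : ℝ)) : ℂ) by push_cast; ring,
          Complex.norm_real]
        rw [Real.norm_eq_abs, abs_of_pos (by linarith)]
      rw [h1]
      exact mul_le_mul_of_nonneg_left (norm_id_le) (by linarith)
    · refine le_trans (opNorm_smul_le _ _) ?_
      have h2 : ‖((q : ℂ)) ^ 2‖ = q ^ 2 := by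
        rw [norm_pow, Complex.norm_real, Real.norm_eq_abs, sq_abs]
      rw [h2, hAA]
  rw [haA] at hb
  have hpos : (0:ℝ) < 1 - q ^ 2 := by linarith
  have hsq : ‖α‖ * ‖α‖ ≤ 1 := by nlinarith
  nlinarith [norm_nonneg α]

include hccr hq1 in
lemma Gq_pos : (Gq α).IsPositive := by
  refine ⟨isSelfAdjoint_iff_isSymmetric.mp (starGq α), fun x => ?_⟩
  have h1 : (Gq α).reApplyInnerSelf x = ‖x‖ ^ 2 - ‖α x‖ ^ 2 := by
    rw [reApplyInnerSelf]
    rw [show (Gq α) x = x - adjoint α (α x) by simp [Gq, sub_apply, mul_apply]]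
    rw [inner_sub_left, map_sub, inner_self_eq_norm_sq]
    rw [adjoint_inner_left, inner_self_eq_norm_sq]
  rw [h1]
  have h2 : ‖α x‖ ≤ ‖x‖ := by
    calc ‖α x‖ ≤ ‖α‖ * ‖x‖ := α.le_opNorm x
    _ ≤ 1 * ‖x‖ := mul_le_mul_of_nonneg_right (alpha_norm q α hccr hq1) (norm_nonneg x)
    _ = ‖x‖ := one_mul _
  nlinarith [norm_nonneg (α x), norm_nonneg x]

include hccr hq1 in
lemma Gq_norm : ‖Gq α‖ ≤ 1 := by
  refine opNorm_le_bound _ zero_le_one fun x => ?_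
  have hsq : Gq α * Gq α = Gq α - ((q:ℂ)^2) • (adjoint α * (Gq α * α)) := by
    have h1 : Gq α * Gq α = Gq α - Gq α * adjoint α * α := by rw [Gq]; noncomm_ring
    rw [h1, Gamma_adj q α hccr, smul_mul_assoc, mul_assoc]
  have e1 : ‖Gq α x‖ ^ 2 = RCLike.re ⟪(Gq α * Gq α) x, x⟫ := by
    rw [mul_apply_eq_comp]
    rw [show ⟪(Gq α) ((Gq α) x), x⟫ = ⟪(Gq α) x, (Gq α) x⟫ by
      rw [← adjointGq α, adjoint_inner_left, adjointGq]]
    rw [inner_self_eq_norm_sq]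
  have e2 : RCLike.re ⟪(Gq α * Gq α) x, x⟫
      = RCLike.re ⟪(Gq α) x, x⟫ - q ^ 2 * RCLike.re ⟪(Gq α) (α x), α x⟫ := by
    rw [hsq]
    simp only [sub_apply, smul_apply, inner_sub_left, inner_smul_left, mul_apply_eq_comp]
    rw [show ⟪adjoint α ((Gq α) (α x)), x⟫ = ⟪(Gq α) (α x), α x⟫ from
      adjoint_inner_left α _ _]
    simp [Complex.conj_ofReal, ← Complex.ofReal_pow]
  have e3 : (0:ℝ) ≤ RCLike.re ⟪(Gq α) (α x), α x⟫ := (Gq_pos q α hccr hq1).2 (α x)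
  have e4 : RCLike.re ⟪(Gq α) x, x⟫ ≤ ‖Gq α x‖ * ‖x‖ :=
    le_trans (RCLike.re_le_norm _) (norm_inner_le_norm _ _)
  have e5 : ‖Gq α x‖ ^ 2 ≤ ‖Gq α x‖ * ‖x‖ := by
    rw [e1, e2]; nlinarith [sq_nonneg q]
  nlinarith [norm_nonneg (Gq α x), norm_nonneg x]

include hccr hq0 hq1 in
lemma Bq_isUnit (j : ℕ) (hj : 1 ≤ j) : IsUnit (Bq q α j) := by
  have h : ‖((q : ℂ) ^ (2 * j)) • Gq α‖ < 1 := by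
    refine lt_of_le_of_lt (opNorm_smul_le _ _) ?_
    rw [norm_pow, Complex.norm_real, Real.norm_eq_abs]
    have h1 : |q| ^ (2 * j) ≤ |q| ^ 2 :=
      pow_le_pow_of_le_one (abs_nonneg q) hq1.le (by omega)
    have h2 : |q| ^ 2 < 1 := pow_lt_one₀ (abs_nonneg q) hq1 two_ne_zero
    have h3 := Gq_norm q α hccr hq1
    have h4 : (0:ℝ) < |q| ^ (2*j) := pow_pos (abs_pos.mpr hq0) _
    nlinarith
  exact ⟨Units.oneSub _ h, Units.val_oneSub _ _⟩

end norm

noncomputable def Biq (j : ℕ) : H →L[ℂ] H := Ring.inverse (Bq q α j)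

lemma starBiq (j : ℕ) : star (Biq q α j) = Biq q α j := by
  rw [Biq, ← Ring.inverse_star, starBq]

lemma commute_Bq {a : H →L[ℂ] H} (h : Commute a (Gq α)) (j : ℕ) :
    Commute a (Bq q α j) := by
  rw [Bq]
  exact (Commute.one_right a).sub_right (h.smul_right _)

omit [CompleteSpace H] in
lemma commute_ringInverse {a b : H →L[ℂ] H} (h : Commute a b) (hb : IsUnit b) :
    Commute a (Ring.inverse b) := by
  obtain ⟨u, rfl⟩ := hb
  rw [Ring.inverse_unit]
  exact h.units_inv_right

section inv
variable (hccr : α * adjoint α - ((q : ℂ) ^ 2) • (adjoint α * α) =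
      ((1 : ℂ) - (q : ℂ) ^ 2) • (1 : H →L[ℂ] H))
  (hq0 : q ≠ 0) (hq1 : |q| < 1)

include hccr hq0 hq1 in
lemma commute_Biq {a : H →L[ℂ] H} (h : Commute a (Gq α)) (j : ℕ) (hj : 1 ≤ j) :
    Commute a (Biq q α j) :=
  commute_ringInverse (commute_Bq q α h j) (Bq_isUnit q α hccr hq0 hq1 j hj)

include hccr hq0 hq1 in
lemma commute_Dq {a : H →L[ℂ] H} (h : Commute a (Gq α)) (k : ℕ) :
    Commute a (Dq q α k) := by
  rw [Dq]
  refine Commute.list_prod_right _ _ fun x hx => ?_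
  obtain ⟨j, -, rfl⟩ := List.mem_map.mp hx
  exact commute_Biq q α hccr hq0 hq1 h (j + 1) (by omega)

lemma Gq_comm_Gq : Commute (Gq α) (Gq α) := Commute.refl _

lemma Biq_Gq_comm (j : ℕ) : Commute (Biq q α j) (Gq α) := by
  rcases em (IsUnit (Bq q α j)) with hu | hu
  · exact (commute_ringInverse (commute_Bq q α (Commute.refl (Gq α)) j) hu).symm
  · rw [Biq, Ring.inverse_non_unit _ hu]
    exact Commute.zero_left _

include hccr hq0 hq1 in
lemma alpha_Biq (j : ℕ) (hj : 1 ≤ j) : α * Biq q α j = Biq q α (j + 1) * α := by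
  have hu := Bq_isUnit q α hccr hq0 hq1 j hj
  have hu' := Bq_isUnit q α hccr hq0 hq1 (j + 1) (by omega)
  have hkey : Bq q α (j + 1) * (α * Biq q α j) = α := by
    rw [← mul_assoc, ← alpha_Bq q α hccr j, mul_assoc, Biq,
      Ring.mul_inverse_cancel _ hu, mul_one]
  calc α * Biq q α j
      = Biq q α (j + 1) * (Bq q α (j + 1) * (α * Biq q α j)) :=
        (Ring.inverse_mul_cancel_left _ _ hu').symm
    _ = Biq q α (j + 1) * α := by rw [hkey]

include hccr hq0 hq1 in
lemma Biq_adjα (j : ℕ) (hj : 1 ≤ j) :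
    Biq q α j * adjoint α = adjoint α * Biq q α (j + 1) := by
  have h := congrArg star (alpha_Biq q α hccr hq0 hq1 j hj)
  simpa [star_mul, star_eq_adjoint, adjoint_adjoint, ← star_eq_adjoint, starBiq] using h

lemma Dq_zero : Dq q α 0 = 1 := by simp [Dq]

lemma Dq_succ (k : ℕ) : Dq q α (k + 1) = Dq q α k * Biq q α (k + 1) := by
  rw [Dq, Dq, List.range_succ, List.map_append, List.prod_append]
  simp [Biq]

lemma Dq_succ' (k : ℕ) :
    Dq q α (k + 1) = Biq q α 1 * ((List.range k).map (fun j => Biq q α (j + 2))).prod := by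
  rw [Dq, List.range_succ_eq_map, List.map_cons, List.prod_cons, List.map_map]
  rfl

include hccr hq0 hq1 in
lemma Dq_star (k : ℕ) : star (Dq q α k) = Dq q α k := by
  induction k with
  | zero => simp [Dq_zero]
  | succ k ih =>
    rw [Dq_succ, star_mul, starBiq, ih]
    exact (commute_Dq q α hccr hq0 hq1 (Biq_Gq_comm q α (k + 1)) k).eq

include hccr hq0 hq1 in
lemma Dsh_alpha (k : ℕ) :
    ((List.range k).map (fun j => Biq q α (j + 2))).prod * α = α * Dq q α k := by
  induction k with
  | zero => simp [Dq_zero]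
  | succ k ih =>
    rw [List.range_succ, List.map_append, List.prod_append, Dq_succ]
    simp only [List.map_cons, List.map_nil, List.prod_cons, List.prod_nil, mul_one]
    rw [mul_assoc, ← alpha_Biq q α hccr hq0 hq1 (k + 1) (by omega), ← mul_assoc, ih,
      mul_assoc]
end inv

section main
variable (hccr : α * adjoint α - ((q : ℂ) ^ 2) • (adjoint α * α) =
      ((1 : ℂ) - (q : ℂ) ^ 2) • (1 : H →L[ℂ] H))
  (hq0 : q ≠ 0) (hq1 : |q| < 1)

include hccr in
lemma alpha_pow_Bq (k j : ℕ) : α ^ k * Bq q α j = Bq q α (j + k) * α ^ k := by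
  induction k with
  | zero => simp
  | succ k ih =>
    rw [pow_succ', mul_assoc, ih, ← mul_assoc, alpha_Bq q α hccr, mul_assoc, ← pow_succ']
    rfl

include hccr hq0 hq1 in
lemma CD_inv (k : ℕ) :
    Dq q α k * (α ^ k * (adjoint α) ^ k) = 1 ∧
    (α ^ k * (adjoint α) ^ k) * Dq q α k = 1 := by
  induction k with
  | zero => simp [Dq_zero]
  | succ k ih =>
    have hu := Bq_isUnit q α hccr hq0 hq1 (k + 1) (by omega)
    have hX : α ^ (k + 1) * (adjoint α) ^ (k + 1)
        = Bq q α (k + 1) * (α ^ k * (adjoint α) ^ k) := by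
      rw [pow_succ (α), pow_succ' (adjoint α)]
      calc α ^ k * α * (adjoint α * (adjoint α) ^ k)
          = α ^ k * (α * adjoint α) * (adjoint α) ^ k := by simp only [mul_assoc]
        _ = α ^ k * Bq q α 1 * (adjoint α) ^ k := by rw [alpha_adj q α hccr]
        _ = Bq q α (1 + k) * α ^ k * (adjoint α) ^ k := by rw [alpha_pow_Bq q α hccr]
        _ = Bq q α (k + 1) * (α ^ k * (adjoint α) ^ k) := by
            rw [Nat.add_comm 1 k, mul_assoc]
    constructor
    · rw [Dq_succ, hX, mul_assoc, ← mul_assoc (Biq q α (k + 1)), Biq,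
        Ring.inverse_mul_cancel _ hu, one_mul, ih.1]
    · rw [Dq_succ, hX]
      calc Bq q α (k + 1) * (α ^ k * (adjoint α) ^ k) * (Dq q α k * Biq q α (k + 1))
          = Bq q α (k + 1) * ((α ^ k * (adjoint α) ^ k) * Dq q α k) * Biq q α (k + 1) := by
            simp only [mul_assoc]
        _ = Bq q α (k + 1) * Biq q α (k + 1) := by rw [ih.2, mul_one]
        _ = 1 := by rw [Biq, Ring.mul_inverse_cancel _ hu]

lemma adjoint_pow_adj (k : ℕ) : adjoint ((adjoint α) ^ k) = α ^ k := by
  simp [← star_eq_adjoint, star_pow, star_star]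

include hccr hq0 hq1 in
lemma Dq_pos (k : ℕ) : (Dq q α k).IsPositive := by
  refine ⟨isSelfAdjoint_iff_isSymmetric.mp (Dq_star q α hccr hq0 hq1 k), fun x => ?_⟩
  have hx : (α ^ k * (adjoint α) ^ k) ((Dq q α k) x) = x := by
    have := congrArg (fun T : H →L[ℂ] H => T x) (CD_inv q α hccr hq0 hq1 k).2
    simpa [mul_apply_eq_comp] using this
  show 0 ≤ RCLike.re ⟪(Dq q α k) x, x⟫
  nth_rewrite 2 [← hx]
  rw [mul_apply_eq_comp, ← adjoint_pow_adj α k, adjoint_inner_right, inner_self_eq_norm_sq]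
  positivity

noncomputable def Eop : H →L[ℂ] H := adjoint α * Biq q α 1 * α

omit hccr hq0 hq1 in
lemma Eop_star : star (Eop q α) = Eop q α := by
  rw [Eop]
  simp only [star_mul, star_eq_adjoint, adjoint_adjoint, ← star_eq_adjoint, starBiq]
  simp only [star_eq_adjoint, adjoint_adjoint, mul_assoc]

include hccr hq0 hq1 in
lemma Eop_idem : Eop q α * Eop q α = Eop q α := by
  have hu := Bq_isUnit q α hccr hq0 hq1 1 le_rfl
  rw [Eop]
  calc adjoint α * Biq q α 1 * α * (adjoint α * Biq q α 1 * α)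
      = adjoint α * Biq q α 1 * (α * adjoint α) * (Biq q α 1 * α) := by
        simp only [mul_assoc]
    _ = adjoint α * (Biq q α 1 * Bq q α 1) * (Biq q α 1 * α) := by
        rw [alpha_adj q α hccr]; simp only [mul_assoc]
    _ = adjoint α * Biq q α 1 * α := by
        rw [Biq, Ring.inverse_mul_cancel _ hu]
        simp only [mul_one, one_mul, mul_assoc]

include hccr in
lemma Eop_Gq_comm : Commute (Eop q α) (Gq α) := by
  have h1 : Eop q α * Gq α = ((q:ℂ)^2) • (adjoint α * Biq q α 1 * (Gq α * α)) := by
    rw [Eop, mul_assoc (adjoint α * Biq q α 1), alpha_Gamma q α hccr, mul_smul_comm]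
  have h2 : Gq α * Eop q α = ((q:ℂ)^2) • (adjoint α * Biq q α 1 * (Gq α * α)) := by
    rw [Eop, ← mul_assoc, ← mul_assoc, Gamma_adj q α hccr, smul_mul_assoc, smul_mul_assoc]
    congr 1
    rw [mul_assoc (adjoint α), (Biq_Gq_comm q α 1).eq.symm]
    simp only [mul_assoc]
  exact h1.trans h2.symm

end main

lemma conj_isPositive (T S : H →L[ℂ] H) (hT : T.IsPositive) :
    (star S * T * S).IsPositive := by
  constructor
  · refine isSelfAdjoint_iff_isSymmetric.mp (show star (star S * T * S) = star S * T * S from ?_)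
    simp only [star_mul, star_star, hT.isSelfAdjoint.star_eq, mul_assoc]
  · intro x
    show 0 ≤ RCLike.re ⟪(star S * T * S) x, x⟫
    simp only [mul_apply_eq_comp]
    rw [star_eq_adjoint, adjoint_inner_left]
    exact hT.2 (S x)

section final
variable (hccr : α * adjoint α - ((q : ℂ) ^ 2) • (adjoint α * α) =
      ((1 : ℂ) - (q : ℂ) ^ 2) • (1 : H →L[ℂ] H))
  (hq0 : q ≠ 0) (hq1 : |q| < 1)

lemma P_eq (k : ℕ) : qCCRProj q α k = (adjoint α) ^ k * Dq q α k * α ^ k := rfl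

include hccr hq0 hq1 in
lemma P_succ (k : ℕ) :
    qCCRProj q α (k + 1) = (adjoint α) ^ k * (Eop q α * Dq q α k) * α ^ k := by
  rw [P_eq, pow_succ (adjoint α), pow_succ' α, Dq_succ']
  calc (adjoint α) ^ k * adjoint α *
        (Biq q α 1 * ((List.range k).map (fun j => Biq q α (j + 2))).prod) * (α * α ^ k)
      = (adjoint α) ^ k * (adjoint α * (Biq q α 1 *
          ((((List.range k).map (fun j => Biq q α (j + 2))).prod) * α))) * α ^ k := by
        simp only [mul_assoc]
    _ = (adjoint α) ^ k * (Eop q α * Dq q α k) * α ^ k := by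
        rw [Dsh_alpha q α hccr hq0 hq1 k, Eop]
        simp only [mul_assoc]

end final

end Aux

/-- **The `P_k` form a decreasing sequence of orthogonal projections.** Moreover each
`1 − q^{2j} Γ` (`j ≥ 1`) is invertible in `B(H)`. -/
theorem qCCRProj_isProjection_antitone
    {H : Type*} [NormedAddCommGroup H] [InnerProductSpace ℂ H] [CompleteSpace H]
    (q : ℝ) (hq0 : q ≠ 0) (hq1 : |q| < 1)
    (α : H →L[ℂ] H)
    (hccr : α * adjoint α - ((q : ℂ) ^ 2) • (adjoint α * α) =
      ((1 : ℂ) - (q : ℂ) ^ 2) • (1 : H →L[ℂ] H)) :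
    (∀ j : ℕ, 1 ≤ j →
      IsUnit ((1 : H →L[ℂ] H) -
        ((q : ℂ) ^ (2 * j)) • ((1 : H →L[ℂ] H) - adjoint α * α))) ∧
    (∀ k : ℕ, IsSelfAdjoint (qCCRProj q α k) ∧
      qCCRProj q α k * qCCRProj q α k = qCCRProj q α k) ∧
    (∀ k : ℕ, (qCCRProj q α k - qCCRProj q α (k + 1)).IsPositive) := by
  refine ⟨fun j hj => Bq_isUnit q α hccr hq0 hq1 j hj, fun k => ⟨?_, ?_⟩, fun k => ?_⟩
  · -- self-adjoint
    rw [isSelfAdjoint_iff, P_eq, star_mul, star_mul, Dq_star q α hccr hq0 hq1 k]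
    rw [show star (α ^ k) = (adjoint α) ^ k by simp [star_pow, star_eq_adjoint],
      show star ((adjoint α) ^ k) = α ^ k by
        simp [star_pow, ← star_eq_adjoint, star_star]]
    simp only [mul_assoc]
  · -- idempotent
    have h : Dq q α k * ((α ^ k * (adjoint α) ^ k) * Dq q α k) = Dq q α k := by
      rw [(CD_inv q α hccr hq0 hq1 k).2, mul_one]
    rw [P_eq]
    calc (adjoint α) ^ k * Dq q α k * α ^ k * ((adjoint α) ^ k * Dq q α k * α ^ k)
        = (adjoint α) ^ k * (Dq q α k * ((α ^ k * (adjoint α) ^ k) * Dq q α k)) * α ^ k := by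
          simp only [mul_assoc]
      _ = (adjoint α) ^ k * Dq q α k * α ^ k := by rw [h, mul_assoc]
  · -- antitone
    have hE := Eop_Gq_comm q α hccr
    have hF : Commute ((1 : H →L[ℂ] H) - Eop q α) (Dq q α k) :=
      (Commute.one_left _).sub_left (commute_Dq q α hccr hq0 hq1 hE k)
    have hFidem : ((1 : H →L[ℂ] H) - Eop q α) * ((1 : H →L[ℂ] H) - Eop q α)
        = (1 : H →L[ℂ] H) - Eop q α := by
      rw [sub_mul, one_mul, mul_sub, mul_one, Eop_idem q α hccr hq0 hq1]
      abel
    have hFstar : star ((1 : H →L[ℂ] H) - Eop q α) = (1 : H →L[ℂ] H) - Eop q α := by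
      rw [star_sub, star_one, Eop_star q α]
    set S : H →L[ℂ] H := ((1 : H →L[ℂ] H) - Eop q α) * α ^ k with hS
    have hSstar : star S = (adjoint α) ^ k * ((1 : H →L[ℂ] H) - Eop q α) := by
      rw [hS, star_mul, hFstar, show star (α ^ k) = (adjoint α) ^ k by
        simp [star_pow, star_eq_adjoint]]
    have key : qCCRProj q α k - qCCRProj q α (k + 1) = star S * Dq q α k * S := by
      rw [P_eq, P_succ q α hccr hq0 hq1 k, hSstar, hS]
      calc (adjoint α) ^ k * Dq q α k * α ^ k
            - (adjoint α) ^ k * (Eop q α * Dq q α k) * α ^ k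
          = (adjoint α) ^ k * (((1 : H →L[ℂ] H) - Eop q α) * Dq q α k) * α ^ k := by
            noncomm_ring
        _ = (adjoint α) ^ k * (((1 : H →L[ℂ] H) - Eop q α) *
              (((1 : H →L[ℂ] H) - Eop q α) * Dq q α k)) * α ^ k := by
            rw [← mul_assoc ((1 : H →L[ℂ] H) - Eop q α), hFidem]
        _ = (adjoint α) ^ k * (((1 : H →L[ℂ] H) - Eop q α) *
              (Dq q α k * ((1 : H →L[ℂ] H) - Eop q α))) * α ^ k := by
            rw [hF.eq]
        _ = (adjoint α) ^ k * ((1 : H →L[ℂ] H) - Eop q α) * Dq q α k *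
              (((1 : H →L[ℂ] H) - Eop q α) * α ^ k) := by
            simp only [mul_assoc]
    rw [key]
    exact conj_isPositive (Dq q α k) S (Dq_pos q α hccr hq0 hq1 k)
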